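/- Let N ≥ 2 and let Ω = B'₁ × (0,1) ⊂ ℝᴺ where B'₁ is the unit ball of ℝ^{N-1}. Define uₙ(x) = (1-r)ⁿ (n x', x_N) where r = |x'| and x = (x', x_N). Then (with C depending only on N) ∫_Ω |Duₙ|^{N-1} dx ≤ C for all n ≥ 1, using the estimate ∫₀¹ r^k (1-r)^{m} dr ≤ k!/m^{k+1} (up to constants). -/

import Mathlib

open MeasureTheory Set Metric Real
set_option maxHeartbeats 1600000

lemma aux_add3_pow {a b c : ℝ} (ha : 0 ≤ a) (hb : 0 ≤ b) (hc : 0 ≤ c) (d : ℕ) :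
    (a + b + c) ^ d ≤ 3 ^ d * (a ^ d + b ^ d + c ^ d) := by
  have hM : a + b + c ≤ 3 * max a (max b c) := by
    have h1 : a ≤ max a (max b c) := le_max_left _ _
    have h2 : b ≤ max a (max b c) := le_trans (le_max_left _ _) (le_max_right _ _)
    have h3 : c ≤ max a (max b c) := le_trans (le_max_right _ _) (le_max_right _ _)
    linarith
  have hMn : 0 ≤ max a (max b c) := le_trans ha (le_max_left _ _)
  calc (a + b + c) ^ d ≤ (3 * max a (max b c)) ^ d :=
        pow_le_pow_left₀ (by positivity) hM d
    _ = 3 ^ d * (max a (max b c)) ^ d := mul_pow _ _ _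
    _ ≤ 3 ^ d * (a ^ d + b ^ d + c ^ d) := by
        apply mul_le_mul_of_nonneg_left _ (by positivity)
        rcases max_cases a (max b c) with ⟨h, _⟩ | ⟨h, _⟩
        · rw [h]; nlinarith [pow_nonneg hb d, pow_nonneg hc d]
        · rcases max_cases b c with ⟨h2, _⟩ | ⟨h2, _⟩ <;> rw [h, h2] <;>
            nlinarith [pow_nonneg ha d, pow_nonneg hb d, pow_nonneg hc d]

lemma aux_intOn_Ioo {f : ℝ → ℝ} (hf : Continuous f) {M : ℝ}
    (hM : ∀ y ∈ Ioo (0:ℝ) 1, |f y| ≤ M) : IntegrableOn f (Ioo (0:ℝ) 1) := by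
  apply Measure.integrableOn_of_bounded (by simp) hf.aestronglyMeasurable (M := M)
  filter_upwards [ae_restrict_mem measurableSet_Ioo] with y hy
  simpa using hM y hy

lemma aux_le_one (k m : ℕ) {y : ℝ} (hy : y ∈ Ioo (0:ℝ) 1) : y ^ k * (1 - y) ^ m ≤ 1 := by
  obtain ⟨h0, h1⟩ := hy
  have h2 : (0:ℝ) ≤ 1 - y := by linarith
  have h3 : (1:ℝ) - y ≤ 1 := by linarith
  exact mul_le_one₀ (pow_le_one₀ h0.le h1.le) (pow_nonneg h2 m) (pow_le_one₀ h2 h3)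

lemma aux_nonneg (k m : ℕ) {y : ℝ} (hy : y ∈ Ioo (0:ℝ) 1) : 0 ≤ y ^ k * (1 - y) ^ m := by
  obtain ⟨h0, h1⟩ := hy
  have h2 : (0:ℝ) ≤ 1 - y := by linarith
  positivity

lemma aux_J_le_one (k m : ℕ) : ∫ y in Ioo (0:ℝ) 1, y ^ k * (1 - y) ^ m ≤ 1 := by
  calc ∫ y in Ioo (0:ℝ) 1, y ^ k * (1 - y) ^ m
      ≤ ∫ _y in Ioo (0:ℝ) 1, (1:ℝ) := by
        apply setIntegral_mono_on
        · refine aux_intOn_Ioo (by continuity) (M := 1) ?_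
          intro y hy
          rw [abs_of_nonneg (aux_nonneg k m hy)]
          exact aux_le_one k m hy
        · exact integrableOn_const (by simp)
        · exact measurableSet_Ioo
        · intro y hy; exact aux_le_one k m hy
    _ = 1 := by simp

lemma aux_J_le (k m : ℕ) (hm : 1 ≤ m) :
    ∫ y in Ioo (0:ℝ) 1, y ^ k * (1 - y) ^ m ≤ k.factorial / (m:ℝ) ^ (k + 1) := by
  have hm0 : (0:ℝ) < m := by exact_mod_cast hm
  have hint : IntegrableOn (fun y : ℝ => y ^ k * Real.exp (-(m * y))) (Ioi (0:ℝ)) := by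
    have h := integrableOn_rpow_mul_exp_neg_mul_rpow (p := 1) (s := (k:ℝ)) (b := (m:ℝ))
      (lt_of_lt_of_le (by norm_num) (Nat.cast_nonneg k)) one_pos hm0
    have : (fun x : ℝ => x ^ (k:ℝ) * Real.exp (-(m:ℝ) * x ^ (1:ℝ)))
        = fun y : ℝ => y ^ k * Real.exp (-(m * y)) := by
      funext x; rw [Real.rpow_natCast, Real.rpow_one, neg_mul]
    rwa [this] at h
  calc ∫ y in Ioo (0:ℝ) 1, y ^ k * (1 - y) ^ m
      ≤ ∫ y in Ioo (0:ℝ) 1, y ^ k * Real.exp (-(m * y)) := by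
        apply setIntegral_mono_on
        · exact aux_intOn_Ioo (by continuity) (M := 1) fun y hy => by
            rw [abs_of_nonneg (aux_nonneg k m hy)]; exact aux_le_one k m hy
        · exact hint.mono_set Ioo_subset_Ioi_self
        · exact measurableSet_Ioo
        · intro y hy
          have h2 : (0:ℝ) ≤ 1 - y := by linarith [hy.2]
          have e1 : 1 - y ≤ Real.exp (-y) := by linarith [Real.add_one_le_exp (-y)]
          have e2 : (1 - y) ^ m ≤ Real.exp (-(m * y)) := by
            calc (1 - y) ^ m ≤ Real.exp (-y) ^ m := pow_le_pow_left₀ h2 e1 m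
              _ = Real.exp (-(m * y)) := by
                  rw [← Real.exp_nat_mul]; ring_nf
          have h0 : (0:ℝ) ≤ y ^ k := pow_nonneg hy.1.le k
          exact mul_le_mul_of_nonneg_left e2 h0
    _ ≤ ∫ y in Ioi (0:ℝ), y ^ k * Real.exp (-(m * y)) := by
        apply setIntegral_mono_set hint
        · filter_upwards [ae_restrict_mem measurableSet_Ioi] with y hy
          have : (0:ℝ) < y := hy
          positivity
        · exact HasSubset.Subset.eventuallyLE Ioo_subset_Ioi_self
    _ = (k.factorial : ℝ) / (m:ℝ) ^ (k + 1) := by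
        have hGamma := Real.integral_rpow_mul_exp_neg_mul_Ioi
          (a := (k:ℝ) + 1) (r := (m:ℝ)) (by positivity) hm0
        have hcong : ∫ t in Ioi (0:ℝ), t ^ ((k:ℝ) + 1 - 1) * Real.exp (-((m:ℝ) * t))
            = ∫ t in Ioi (0:ℝ), t ^ k * Real.exp (-((m:ℝ) * t)) := by
          apply setIntegral_congr_fun measurableSet_Ioi
          intro t _
          simp only [show (k:ℝ) + 1 - 1 = (k:ℝ) by ring, Real.rpow_natCast]
        rw [hcong] at hGamma
        rw [hGamma, show (k:ℝ) + 1 = ((k + 1 : ℕ) : ℝ) by push_cast; ring,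
          Real.rpow_natCast]
        have : Real.Gamma (((k + 1 : ℕ) : ℝ)) = k.factorial := by
          rw [show ((k + 1 : ℕ) : ℝ) = (k:ℝ) + 1 by push_cast; ring]
          exact Real.Gamma_nat_eq_factorial k
        rw [this, one_div, inv_pow, inv_mul_eq_div]


lemma aux_deriv_bound {d : ℕ} (n : ℕ) (hn : 1 ≤ n)
    (x : EuclideanSpace ℝ (Fin d) × ℝ) (hx0 : x.1 ≠ 0) (hx1 : ‖x.1‖ < 1) (hx2 : |x.2| ≤ 1) :
    ‖fderiv ℝ (fun y : EuclideanSpace ℝ (Fin d) × ℝ =>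
        ((1 - ‖y.1‖) ^ n • ((n : ℝ) • y.1), (1 - ‖y.1‖) ^ n * y.2)) x‖
      ≤ (n:ℝ) ^ 2 * ‖x.1‖ * (1 - ‖x.1‖) ^ (n - 1) + 2 * n * (1 - ‖x.1‖) ^ (n - 1) + 1 := by
  have hr0 : 0 ≤ ‖x.1‖ := norm_nonneg _
  have hr1 : 0 ≤ 1 - ‖x.1‖ := by linarith
  have hn0 : (0:ℝ) ≤ (n:ℝ) := Nat.cast_nonneg n
  have hp0 : (0:ℝ) ≤ (1 - ‖x.1‖) ^ (n - 1) := pow_nonneg hr1 _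
  have hlip : LipschitzWith 1 (fun y : EuclideanSpace ℝ (Fin d) × ℝ => ‖y.1‖) := by
    simpa [Function.comp_def] using lipschitzWith_one_norm.comp
      (LipschitzWith.prod_fst (α := EuclideanSpace ℝ (Fin d)) (β := ℝ))
  obtain ⟨ν, hνd⟩ : ∃ ν, HasFDerivAt (fun y : EuclideanSpace ℝ (Fin d) × ℝ => ‖y.1‖) ν x :=
    ⟨_, ((differentiableAt_fst).norm ℝ hx0).hasFDerivAt⟩
  have hνle : ‖ν‖ ≤ 1 := by simpa using hνd.le_of_lipschitz hlip
  have hpow : HasDerivAt (fun t : ℝ => (1 - t) ^ n)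
      ((n:ℝ) * (1 - ‖x.1‖) ^ (n - 1) * (-1)) ‖x.1‖ :=
    (((hasDerivAt_id ‖x.1‖).const_sub 1).pow n : )
  obtain ⟨Dφ, hφ, hDφle⟩ : ∃ D, HasFDerivAt
      (fun y : EuclideanSpace ℝ (Fin d) × ℝ => (1 - ‖y.1‖) ^ n) D x
      ∧ ‖D‖ ≤ (n:ℝ) * (1 - ‖x.1‖) ^ (n - 1) := by
    refine ⟨_, hpow.comp_hasFDerivAt (f := fun y : EuclideanSpace ℝ (Fin d) × ℝ => ‖y.1‖) x hνd, ?_⟩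
    rw [norm_smul, Real.norm_eq_abs, abs_mul, abs_neg, abs_one, mul_one,
      abs_of_nonneg (by positivity)]
    calc (n:ℝ) * (1 - ‖x.1‖) ^ (n - 1) * ‖ν‖
        ≤ (n:ℝ) * (1 - ‖x.1‖) ^ (n - 1) * 1 :=
          mul_le_mul_of_nonneg_left hνle (by positivity)
      _ = (n:ℝ) * (1 - ‖x.1‖) ^ (n - 1) := mul_one _
  have hg : HasFDerivAt (fun y : EuclideanSpace ℝ (Fin d) × ℝ => (n:ℝ) • y.1)
      ((n:ℝ) • ContinuousLinearMap.fst ℝ (EuclideanSpace ℝ (Fin d)) ℝ) x :=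
    (hasFDerivAt_fst).const_smul (n:ℝ)
  have h1 := hφ.smul hg
  have h2 := hφ.mul (hasFDerivAt_snd (p := x) (𝕜 := ℝ) (E := EuclideanSpace ℝ (Fin d)) (F := ℝ))
  rw [HasFDerivAt.fderiv (f := fun y : EuclideanSpace ℝ (Fin d) × ℝ =>
      ((1 - ‖y.1‖) ^ n • ((n : ℝ) • y.1), (1 - ‖y.1‖) ^ n * y.2)) (h1.prodMk h2), ContinuousLinearMap.opNorm_prod, Prod.norm_def]
  have hpow1 : (1 - ‖x.1‖) ^ n ≤ (1 - ‖x.1‖) ^ (n - 1) :=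
    pow_le_pow_of_le_one hr1 (by linarith) (Nat.sub_le n 1)
  have hpown : (1 - ‖x.1‖) ^ n ≤ 1 := pow_le_one₀ hr1 (by linarith)
  have hpownn : (0:ℝ) ≤ (1 - ‖x.1‖) ^ n := pow_nonneg hr1 _
  have hfst : ‖ContinuousLinearMap.fst ℝ (EuclideanSpace ℝ (Fin d)) ℝ‖ ≤ 1 :=
    ContinuousLinearMap.norm_fst_le ℝ (EuclideanSpace ℝ (Fin d)) ℝ
  have hsnd : ‖ContinuousLinearMap.snd ℝ (EuclideanSpace ℝ (Fin d)) ℝ‖ ≤ 1 :=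
    ContinuousLinearMap.norm_snd_le ℝ (EuclideanSpace ℝ (Fin d)) ℝ
  have key1 : (0:ℝ) ≤ (n:ℝ) * (1 - ‖x.1‖) ^ (n - 1) := by positivity
  have key2 : (0:ℝ) ≤ (n:ℝ) ^ 2 * ‖x.1‖ * (1 - ‖x.1‖) ^ (n - 1) := by positivity
  apply max_le
  · -- first component
    have e1 : ‖(1 - ‖x.1‖) ^ n • ((n:ℝ) • ContinuousLinearMap.fst ℝ (EuclideanSpace ℝ (Fin d)) ℝ)‖
        ≤ (n:ℝ) * (1 - ‖x.1‖) ^ (n - 1) := by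
      calc ‖(1 - ‖x.1‖) ^ n • ((n:ℝ) • ContinuousLinearMap.fst ℝ (EuclideanSpace ℝ (Fin d)) ℝ)‖
          ≤ ‖(1 - ‖x.1‖) ^ n‖ * ‖(n:ℝ) • ContinuousLinearMap.fst ℝ (EuclideanSpace ℝ (Fin d)) ℝ‖ :=
            ContinuousLinearMap.opNorm_smul_le _ _
        _ ≤ ‖(1 - ‖x.1‖) ^ n‖ * (‖(n:ℝ)‖ * ‖ContinuousLinearMap.fst ℝ (EuclideanSpace ℝ (Fin d)) ℝ‖) :=
            mul_le_mul_of_nonneg_left (ContinuousLinearMap.opNorm_smul_le _ _) (norm_nonneg _)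
        _ = (1 - ‖x.1‖) ^ n * ((n:ℝ) * ‖ContinuousLinearMap.fst ℝ (EuclideanSpace ℝ (Fin d)) ℝ‖) := by
            rw [Real.norm_eq_abs, Real.norm_eq_abs, Nat.abs_cast, abs_of_nonneg hpownn]
        _ ≤ (1 - ‖x.1‖) ^ (n - 1) * ((n:ℝ) * 1) := by
            apply mul_le_mul hpow1 (mul_le_mul_of_nonneg_left hfst hn0) (by positivity) hp0
        _ = (n:ℝ) * (1 - ‖x.1‖) ^ (n - 1) := by ring
    have e2 : ‖Dφ.smulRight ((n:ℝ) • x.1)‖ ≤ (n:ℝ) ^ 2 * ‖x.1‖ * (1 - ‖x.1‖) ^ (n - 1) := by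
      rw [ContinuousLinearMap.norm_smulRight_apply, norm_smul, Real.norm_eq_abs, Nat.abs_cast]
      calc ‖Dφ‖ * ((n:ℝ) * ‖x.1‖)
          ≤ ((n:ℝ) * (1 - ‖x.1‖) ^ (n - 1)) * ((n:ℝ) * ‖x.1‖) :=
            mul_le_mul_of_nonneg_right hDφle (by positivity)
        _ = (n:ℝ) ^ 2 * ‖x.1‖ * (1 - ‖x.1‖) ^ (n - 1) := by ring
    calc ‖(1 - ‖x.1‖) ^ n • ((n:ℝ) • ContinuousLinearMap.fst ℝ (EuclideanSpace ℝ (Fin d)) ℝ)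
          + Dφ.smulRight ((n:ℝ) • x.1)‖
        ≤ ‖(1 - ‖x.1‖) ^ n • ((n:ℝ) • ContinuousLinearMap.fst ℝ (EuclideanSpace ℝ (Fin d)) ℝ)‖
          + ‖Dφ.smulRight ((n:ℝ) • x.1)‖ := norm_add_le _ _
      _ ≤ (n:ℝ) * (1 - ‖x.1‖) ^ (n - 1) + (n:ℝ) ^ 2 * ‖x.1‖ * (1 - ‖x.1‖) ^ (n - 1) :=
          add_le_add e1 e2
      _ ≤ (n:ℝ) ^ 2 * ‖x.1‖ * (1 - ‖x.1‖) ^ (n - 1) + 2 * n * (1 - ‖x.1‖) ^ (n - 1) + 1 := by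
          linarith [key1]
  · -- second component
    have e1 : ‖(1 - ‖x.1‖) ^ n • ContinuousLinearMap.snd ℝ (EuclideanSpace ℝ (Fin d)) ℝ‖ ≤ 1 := by
      calc ‖(1 - ‖x.1‖) ^ n • ContinuousLinearMap.snd ℝ (EuclideanSpace ℝ (Fin d)) ℝ‖
          ≤ ‖(1 - ‖x.1‖) ^ n‖ * ‖ContinuousLinearMap.snd ℝ (EuclideanSpace ℝ (Fin d)) ℝ‖ :=
            ContinuousLinearMap.opNorm_smul_le _ _
        _ = (1 - ‖x.1‖) ^ n * ‖ContinuousLinearMap.snd ℝ (EuclideanSpace ℝ (Fin d)) ℝ‖ := by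
            rw [Real.norm_eq_abs, abs_of_nonneg hpownn]
        _ ≤ 1 * 1 := mul_le_mul hpown hsnd (norm_nonneg _) zero_le_one
        _ = 1 := one_mul 1
    have e2 : ‖x.2 • Dφ‖ ≤ (n:ℝ) * (1 - ‖x.1‖) ^ (n - 1) := by
      calc ‖x.2 • Dφ‖ ≤ ‖x.2‖ * ‖Dφ‖ := ContinuousLinearMap.opNorm_smul_le _ _
        _ = |x.2| * ‖Dφ‖ := by rw [Real.norm_eq_abs]
        _ ≤ 1 * ((n:ℝ) * (1 - ‖x.1‖) ^ (n - 1)) :=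
            mul_le_mul hx2 hDφle (norm_nonneg _) zero_le_one
        _ = (n:ℝ) * (1 - ‖x.1‖) ^ (n - 1) := one_mul _
    calc ‖(1 - ‖x.1‖) ^ n • ContinuousLinearMap.snd ℝ (EuclideanSpace ℝ (Fin d)) ℝ + x.2 • Dφ‖
        ≤ ‖(1 - ‖x.1‖) ^ n • ContinuousLinearMap.snd ℝ (EuclideanSpace ℝ (Fin d)) ℝ‖
          + ‖x.2 • Dφ‖ := norm_add_le _ _
      _ ≤ 1 + (n:ℝ) * (1 - ‖x.1‖) ^ (n - 1) := add_le_add e1 e2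
      _ ≤ (n:ℝ) ^ 2 * ‖x.1‖ * (1 - ‖x.1‖) ^ (n - 1) + 2 * n * (1 - ‖x.1‖) ^ (n - 1) + 1 := by
          linarith [key1, key2]


lemma aux_intJ (k m : ℕ) : IntegrableOn (fun y : ℝ => y ^ k * (1 - y) ^ m) (Ioo (0:ℝ) 1) :=
  aux_intOn_Ioo (by continuity) (M := 1) fun y hy => by
    rw [abs_of_nonneg (aux_nonneg k m hy)]; exact aux_le_one k m hy
/-- Example 3.9, uniform `W^{1,N-1}` bound: for
`uₙ(x',x_N) = (1-|x'|)ⁿ (n x', x_N)` on `Ω = B'₁ × (0,1)`, one has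
`∫_Ω |Duₙ|^{N-1} dx ≤ C` for all `n ≥ 1`, with `C` depending only on `N`. -/
theorem stmt18 (N : ℕ) (hN : 2 ≤ N)
    (Ω : Set (EuclideanSpace ℝ (Fin (N - 1)) × ℝ))
    (hΩ : Ω = {x : EuclideanSpace ℝ (Fin (N - 1)) × ℝ | ‖x.1‖ < 1 ∧ x.2 ∈ Ioo (0:ℝ) 1})
    (u : ℕ → EuclideanSpace ℝ (Fin (N - 1)) × ℝ → EuclideanSpace ℝ (Fin (N - 1)) × ℝ)
    (hu : ∀ n x, u n x =
      ((1 - ‖x.1‖) ^ n • ((n : ℝ) • x.1), (1 - ‖x.1‖) ^ n * x.2)) :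
    ∃ C : ℝ, 0 < C ∧ ∀ n : ℕ, 1 ≤ n →
      ∫ x in Ω, ‖fderiv ℝ (u n) x‖ ^ (N - 1) ≤ C := by
  haveI : Nonempty (Fin (N - 1)) := ⟨⟨0, by omega⟩⟩
  haveI hnt : Nontrivial (EuclideanSpace ℝ (Fin (N - 1))) :=
    inferInstance
  obtain ⟨e, hNe⟩ : ∃ e, N - 1 = e + 1 := ⟨N - 2, by omega⟩
  set S : ℝ := 3 ^ (N - 1) * (((2 * (N - 1) - 1).factorial : ℝ) * 4 ^ (N - 1)
    + (((N - 1 - 1).factorial : ℝ)) * 4 ^ (N - 1) + 1) with hS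
  have hSnn : 0 ≤ S := by positivity
  set vol1 : ℝ := (volume (ball (0 : EuclideanSpace ℝ (Fin (N - 1))) 1)).toReal with hvol1
  have hvolnn : 0 ≤ vol1 := ENNReal.toReal_nonneg
  refine ⟨((N - 1 : ℕ) : ℝ) * (vol1 * S) + 1, ?_, ?_⟩
  · have h1 : (0:ℝ) ≤ ((N - 1 : ℕ) : ℝ) * (vol1 * S) :=
      mul_nonneg (Nat.cast_nonneg _) (mul_nonneg hvolnn hSnn)
    linarith
  intro n hn
  obtain ⟨p, hnp⟩ : ∃ p, n = p + 1 := ⟨n - 1, by omega⟩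
  have hufun : u n = (fun y : EuclideanSpace ℝ (Fin (N - 1)) × ℝ =>
      ((1 - ‖y.1‖) ^ n • ((n : ℝ) • y.1), (1 - ‖y.1‖) ^ n * y.2)) := funext (hu n)
  have hΩeq : Ω = (ball (0 : EuclideanSpace ℝ (Fin (N - 1))) 1) ×ˢ (Ioo (0:ℝ) 1) := by
    rw [hΩ]; ext x; simp [Set.mem_prod, mem_ball_zero_iff]
  rw [hufun, hΩeq]
  set τ : ℝ → ℝ := fun y =>
    (n:ℝ) ^ 2 * y * (1 - y) ^ (n - 1) + 2 * n * (1 - y) ^ (n - 1) + 1 with hτ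
  set G : ℝ → ℝ := (Ioo (0:ℝ) 1).indicator (fun y => τ y ^ (N - 1)) with hG
  have hτcont : Continuous τ := by rw [hτ]; continuity
  have hGmeas : Measurable G :=
    ((hτcont.pow (N - 1)).measurable).indicator measurableSet_Ioo
  have hτnn : ∀ y ∈ Ioo (0:ℝ) 1, 0 ≤ τ y := by
    intro y hy
    obtain ⟨h0, h1⟩ := hy
    have h2 : (0:ℝ) ≤ 1 - y := by linarith
    simp only [hτ]
    positivity
  have hτle : ∀ y ∈ Ioo (0:ℝ) 1, τ y ≤ (n:ℝ) ^ 2 + 2 * n + 1 := by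
    intro y hy
    obtain ⟨h0, h1⟩ := hy
    have h2 : (0:ℝ) ≤ 1 - y := by linarith
    have h3 : (1 - y) ^ (n - 1) ≤ 1 := pow_le_one₀ h2 (by linarith)
    have h4 : (0:ℝ) ≤ (1 - y) ^ (n - 1) := pow_nonneg h2 _
    have h5 : y * (1 - y) ^ (n - 1) ≤ 1 := mul_le_one₀ h1.le h4 h3
    have h6 : (n:ℝ) ^ 2 * (y * (1 - y) ^ (n - 1)) ≤ (n:ℝ) ^ 2 * 1 :=
      mul_le_mul_of_nonneg_left h5 (by positivity)
    have h7 : 2 * (n:ℝ) * (1 - y) ^ (n - 1) ≤ 2 * (n:ℝ) * 1 :=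
      mul_le_mul_of_nonneg_left h3 (by positivity)
    simp only [hτ]
    nlinarith [h6, h7]
  set M : ℝ := ((n:ℝ) ^ 2 + 2 * n + 1) ^ (N - 1) with hMdef
  have hMnn : 0 ≤ M := by positivity
  have hGnn : ∀ y, 0 ≤ G y := fun y =>
    Set.indicator_nonneg (fun z hz => pow_nonneg (hτnn z hz) _) y
  have hGle : ∀ y, G y ≤ M := by
    intro y
    rw [hG]
    by_cases h : y ∈ Ioo (0:ℝ) 1
    · rw [Set.indicator_of_mem h]
      exact pow_le_pow_left₀ (hτnn y h) (hτle y h) _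
    · rw [Set.indicator_of_notMem h]; exact hMnn
  have hmeasP : MeasurableSet
      ((ball (0 : EuclideanSpace ℝ (Fin (N - 1))) 1) ×ˢ (Ioo (0:ℝ) 1)) :=
    measurableSet_ball.prod measurableSet_Ioo
  have hfinP : volume ((ball (0 : EuclideanSpace ℝ (Fin (N - 1))) 1) ×ˢ (Ioo (0:ℝ) 1)) < ⊤ := by
    rw [Measure.volume_eq_prod, Measure.prod_prod]
    exact ENNReal.mul_lt_top measure_ball_lt_top (by simp)
  have hGint : IntegrableOn
      (fun x : EuclideanSpace ℝ (Fin (N - 1)) × ℝ => G ‖x.1‖)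
      ((ball (0 : EuclideanSpace ℝ (Fin (N - 1))) 1) ×ˢ (Ioo (0:ℝ) 1)) := by
    apply Measure.integrableOn_of_bounded hfinP.ne
      ((hGmeas.comp (measurable_fst.norm)).aestronglyMeasurable) (M := M)
    filter_upwards with x
    show ‖G ‖x.1‖‖ ≤ M
    rw [Real.norm_eq_abs, abs_of_nonneg (hGnn _)]
    exact hGle _
  have hnull : volume {x : EuclideanSpace ℝ (Fin (N - 1)) × ℝ | x.1 = 0} = 0 := by
    have hzs : {x : EuclideanSpace ℝ (Fin (N - 1)) × ℝ | x.1 = 0}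
        = ({0} : Set (EuclideanSpace ℝ (Fin (N - 1)))) ×ˢ (univ : Set ℝ) := by
      ext x
      constructor
      · intro h; exact Set.mem_prod.mpr ⟨Set.mem_singleton_iff.2 h, trivial⟩
      · intro h; exact Set.mem_singleton_iff.1 (Set.mem_prod.mp h).1
    rw [hzs, Measure.volume_eq_prod, Measure.prod_prod, measure_singleton, zero_mul]
  have hae0 : ∀ᵐ x : EuclideanSpace ℝ (Fin (N - 1)) × ℝ, x.1 ≠ 0 := by
    rw [ae_iff]
    have hset : {a : EuclideanSpace ℝ (Fin (N - 1)) × ℝ | ¬ a.1 ≠ 0}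
        = {x : EuclideanSpace ℝ (Fin (N - 1)) × ℝ | x.1 = 0} := by ext a; simp
    rw [hset]; exact hnull
  have hcmp : ∫ x in (ball (0 : EuclideanSpace ℝ (Fin (N - 1))) 1) ×ˢ (Ioo (0:ℝ) 1),
      ‖fderiv ℝ (fun y : EuclideanSpace ℝ (Fin (N - 1)) × ℝ =>
        ((1 - ‖y.1‖) ^ n • ((n : ℝ) • y.1), (1 - ‖y.1‖) ^ n * y.2)) x‖ ^ (N - 1)
      ≤ ∫ x in (ball (0 : EuclideanSpace ℝ (Fin (N - 1))) 1) ×ˢ (Ioo (0:ℝ) 1), G ‖x.1‖ := by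
    apply integral_mono_of_nonneg
    · filter_upwards with x; positivity
    · exact hGint
    · filter_upwards [ae_restrict_mem hmeasP, ae_restrict_of_ae hae0] with x hxΩ hx0
      obtain ⟨hx1, hx2⟩ := hxΩ
      rw [mem_ball_zero_iff] at hx1
      have hx2' : |x.2| ≤ 1 := by
        rw [abs_le]; exact ⟨by linarith [hx2.1], hx2.2.le⟩
      have hmem : ‖x.1‖ ∈ Ioo (0:ℝ) 1 := ⟨norm_pos_iff.2 hx0, hx1⟩
      have hGv : G ‖x.1‖ = τ ‖x.1‖ ^ (N - 1) := by rw [hG, Set.indicator_of_mem hmem]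
      rw [hGv]
      refine pow_le_pow_left₀ (norm_nonneg _) ?_ _
      simp only [hτ]
      exact aux_deriv_bound n hn x hx0 hx1 hx2'
  have hsplit : ∫ x in (ball (0 : EuclideanSpace ℝ (Fin (N - 1))) 1) ×ˢ (Ioo (0:ℝ) 1), G ‖x.1‖
      = ∫ x' in ball (0 : EuclideanSpace ℝ (Fin (N - 1))) 1, G ‖x'‖ := by
    have h := setIntegral_prod_mul (μ := (volume : Measure (EuclideanSpace ℝ (Fin (N - 1)))))
      (ν := (volume : Measure ℝ)) (fun a => G ‖a‖) (fun _ => (1:ℝ)) (ball 0 1) (Ioo 0 1)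
    simp only [mul_one] at h
    rw [Measure.volume_eq_prod, h]
    simp [Real.volume_Ioo]
  have hext : ∫ x' in ball (0 : EuclideanSpace ℝ (Fin (N - 1))) 1, G ‖x'‖
      = ∫ x' : EuclideanSpace ℝ (Fin (N - 1)), G ‖x'‖ := by
    apply setIntegral_eq_integral_of_forall_compl_eq_zero
    intro x hx
    rw [mem_ball_zero_iff, not_lt] at hx
    rw [hG, Set.indicator_of_notMem (fun hmem => absurd hmem.2 (not_lt.2 hx))]
  have hpolar := MeasureTheory.integral_fun_norm_addHaar
    (volume : Measure (EuclideanSpace ℝ (Fin (N - 1)))) G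
  rw [finrank_euclideanSpace_fin] at hpolar
  have hindic : ∀ y : ℝ, y ^ (N - 1 - 1) • G y
      = (Ioo (0:ℝ) 1).indicator (fun z => z ^ (N - 1 - 1) * τ z ^ (N - 1)) y := by
    intro y
    by_cases h : y ∈ Ioo (0:ℝ) 1
    · rw [hG, Set.indicator_of_mem h, Set.indicator_of_mem h, smul_eq_mul]
    · rw [hG, Set.indicator_of_notMem h, Set.indicator_of_notMem h, smul_zero]
  have hinner : ∫ y in Ioi (0:ℝ), y ^ (N - 1 - 1) • G y
      = ∫ y in Ioo (0:ℝ) 1, y ^ (N - 1 - 1) * τ y ^ (N - 1) := by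
    simp_rw [hindic]
    rw [integral_indicator measurableSet_Ioo, Measure.restrict_restrict measurableSet_Ioo,
      inter_eq_self_of_subset_left Ioo_subset_Ioi_self]
  -- the key estimate on the 1-dimensional integral
  have hIbound : ∫ y in Ioo (0:ℝ) 1, y ^ (N - 1 - 1) * τ y ^ (N - 1) ≤ S := by
    have hptwise : ∀ y ∈ Ioo (0:ℝ) 1, y ^ (N - 1 - 1) * τ y ^ (N - 1)
        ≤ 3 ^ (N - 1) * ((n:ℝ) ^ (2 * (N - 1))
            * (y ^ (2 * (N - 1) - 1) * (1 - y) ^ ((n - 1) * (N - 1)))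
          + (2 * (n:ℝ)) ^ (N - 1) * (y ^ (N - 1 - 1) * (1 - y) ^ ((n - 1) * (N - 1)))
          + y ^ (N - 1 - 1) * (1 - y) ^ 0) := by
      intro y hy
      obtain ⟨h0, h1⟩ := hy
      have h2 : (0:ℝ) ≤ 1 - y := by linarith
      have ha : 0 ≤ (n:ℝ) ^ 2 * y * (1 - y) ^ (n - 1) := by positivity
      have hb : 0 ≤ 2 * (n:ℝ) * (1 - y) ^ (n - 1) := by positivity
      have h3 := aux_add3_pow ha hb zero_le_one (N - 1)
      have hyk : (0:ℝ) ≤ y ^ (N - 1 - 1) := by positivity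
      calc y ^ (N - 1 - 1) * τ y ^ (N - 1)
          ≤ y ^ (N - 1 - 1) * (3 ^ (N - 1) * (((n:ℝ) ^ 2 * y * (1 - y) ^ (n - 1)) ^ (N - 1)
            + (2 * (n:ℝ) * (1 - y) ^ (n - 1)) ^ (N - 1) + 1 ^ (N - 1))) := by
            apply mul_le_mul_of_nonneg_left _ hyk
            simp only [hτ]
            exact h3
        _ = 3 ^ (N - 1) * ((n:ℝ) ^ (2 * (N - 1))
              * (y ^ (2 * (N - 1) - 1) * (1 - y) ^ ((n - 1) * (N - 1)))
            + (2 * (n:ℝ)) ^ (N - 1) * (y ^ (N - 1 - 1) * (1 - y) ^ ((n - 1) * (N - 1)))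
            + y ^ (N - 1 - 1) * (1 - y) ^ 0) := by
            rw [show (n - 1) * (N - 1) = p * (e + 1) by rw [hnp, hNe]; simp,
              show n - 1 = p from by omega, hNe,
              show e + 1 - 1 = e from by omega,
              show 2 * (e + 1) - 1 = 2 * e + 1 from by omega]
            ring
    have hint1 := aux_intJ (2 * (N - 1) - 1) ((n - 1) * (N - 1))
    have hint2 := aux_intJ (N - 1 - 1) ((n - 1) * (N - 1))
    have hint3 := aux_intJ (N - 1 - 1) 0
    have hLint : IntegrableOn (fun y : ℝ => y ^ (N - 1 - 1) * τ y ^ (N - 1)) (Ioo (0:ℝ) 1) := by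
      apply aux_intOn_Ioo (f := fun y => y ^ (N - 1 - 1) * τ y ^ (N - 1)) ((continuous_pow _).mul (hτcont.pow _)) (M := M)
      intro y hy
      obtain ⟨h0, h1⟩ := hy
      have hτ0 := hτnn y ⟨h0, h1⟩
      have hτm := hτle y ⟨h0, h1⟩
      have h2 : y ^ (N - 1 - 1) ≤ 1 := pow_le_one₀ h0.le h1.le
      have habs : 0 ≤ y ^ (N - 1 - 1) * τ y ^ (N - 1) := by positivity
      rw [abs_of_nonneg habs, hMdef]
      calc y ^ (N - 1 - 1) * τ y ^ (N - 1)
          ≤ 1 * ((n:ℝ) ^ 2 + 2 * n + 1) ^ (N - 1) := by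
            apply mul_le_mul h2 (pow_le_pow_left₀ hτ0 hτm _) (by positivity) zero_le_one
        _ = ((n:ℝ) ^ 2 + 2 * n + 1) ^ (N - 1) := one_mul _
    have hRint : IntegrableOn (fun y : ℝ => 3 ^ (N - 1) * ((n:ℝ) ^ (2 * (N - 1))
          * (y ^ (2 * (N - 1) - 1) * (1 - y) ^ ((n - 1) * (N - 1)))
        + (2 * (n:ℝ)) ^ (N - 1) * (y ^ (N - 1 - 1) * (1 - y) ^ ((n - 1) * (N - 1)))
        + y ^ (N - 1 - 1) * (1 - y) ^ 0)) (Ioo (0:ℝ) 1) :=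
      (((hint1.const_mul _).add (hint2.const_mul _)).add hint3).const_mul _
    have hadd12 : IntegrableOn (fun y : ℝ => (n:ℝ) ^ (2 * (N - 1))
          * (y ^ (2 * (N - 1) - 1) * (1 - y) ^ ((n - 1) * (N - 1)))
        + (2 * (n:ℝ)) ^ (N - 1) * (y ^ (N - 1 - 1) * (1 - y) ^ ((n - 1) * (N - 1))))
        (Ioo (0:ℝ) 1) := (hint1.const_mul _).add (hint2.const_mul _)
    have hstep := setIntegral_mono_on hLint hRint measurableSet_Ioo hptwise
    rw [integral_const_mul,
      integral_add hadd12 hint3,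
      integral_add (hint1.const_mul _) (hint2.const_mul _),
      integral_const_mul, integral_const_mul] at hstep
    refine hstep.trans ?_
    rw [hS]
    have hf1 : (1:ℝ) ≤ ((2 * (N - 1) - 1).factorial : ℝ) :=
      Nat.one_le_cast.2 (Nat.factorial_pos _)
    have hf2 : (1:ℝ) ≤ ((N - 1 - 1).factorial : ℝ) :=
      Nat.one_le_cast.2 (Nat.factorial_pos _)
    have h4p : (1:ℝ) ≤ 4 ^ (N - 1) := one_le_pow₀ (by norm_num)
    have hJ3 : ∫ y in Ioo (0:ℝ) 1, y ^ (N - 1 - 1) * (1 - y) ^ 0 ≤ 1 := aux_J_le_one _ 0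
    have hJ3nn : 0 ≤ ∫ y in Ioo (0:ℝ) 1, y ^ (N - 1 - 1) * (1 - y) ^ 0 :=
      setIntegral_nonneg measurableSet_Ioo fun y hy => aux_nonneg _ _ hy
    apply mul_le_mul_of_nonneg_left _ (by positivity : (0:ℝ) ≤ 3 ^ (N - 1))
    rcases Nat.lt_or_ge n 2 with hc | hc
    · -- n = 1
      have hn1 : n = 1 := by omega
      subst hn1
      have hm0 : (1 - 1) * (N - 1) = 0 := by simp
      rw [hm0]
      have hJ1 := aux_J_le_one (2 * (N - 1) - 1) 0
      have hJ2 := aux_J_le_one (N - 1 - 1) 0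
      have hJ1nn : 0 ≤ ∫ y in Ioo (0:ℝ) 1, y ^ (2 * (N - 1) - 1) * (1 - y) ^ 0 :=
        setIntegral_nonneg measurableSet_Ioo fun y hy => aux_nonneg _ _ hy
      have hJ2nn : 0 ≤ ∫ y in Ioo (0:ℝ) 1, y ^ (N - 1 - 1) * (1 - y) ^ 0 :=
        setIntegral_nonneg measurableSet_Ioo fun y hy => aux_nonneg _ _ hy
      have h2p : (2:ℝ) ^ (N - 1) ≤ 4 ^ (N - 1) := pow_le_pow_left₀ (by norm_num) (by norm_num) _
      have e1 : ((1:ℕ):ℝ) ^ (2 * (N - 1)) * ∫ y in Ioo (0:ℝ) 1, y ^ (2 * (N - 1) - 1) * (1 - y) ^ 0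
          ≤ ((2 * (N - 1) - 1).factorial : ℝ) * 4 ^ (N - 1) := by
        rw [Nat.cast_one, one_pow, one_mul]
        nlinarith
      have e2 : (2 * ((1:ℕ):ℝ)) ^ (N - 1) * ∫ y in Ioo (0:ℝ) 1, y ^ (N - 1 - 1) * (1 - y) ^ 0
          ≤ ((N - 1 - 1).factorial : ℝ) * 4 ^ (N - 1) := by
        have : (2 * ((1:ℕ):ℝ)) ^ (N - 1) = (2:ℝ) ^ (N - 1) := by norm_num
        rw [this]
        nlinarith [pow_nonneg (by norm_num : (0:ℝ) ≤ 2) (N - 1)]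
      linarith
    · -- n ≥ 2
      have hm1 : 1 ≤ (n - 1) * (N - 1) := Nat.mul_pos (by omega) (by omega)
      have hmpos : (0:ℝ) < (((n - 1) * (N - 1) : ℕ) : ℝ) := by exact_mod_cast hm1
      have hmn : (n:ℝ) ≤ 2 * (((n - 1) * (N - 1) : ℕ) : ℝ) := by
        have h : n ≤ 2 * ((n - 1) * (N - 1)) :=
          calc n ≤ 2 * (n - 1) := by omega
            _ ≤ 2 * ((n - 1) * (N - 1)) := by
                apply Nat.mul_le_mul_left
                exact Nat.le_mul_of_pos_right _ (by omega)
        exact_mod_cast h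
      have hJ1 := aux_J_le (2 * (N - 1) - 1) ((n - 1) * (N - 1)) hm1
      have hJ2 := aux_J_le (N - 1 - 1) ((n - 1) * (N - 1)) hm1
      rw [show 2 * (N - 1) - 1 + 1 = 2 * (N - 1) from by omega] at hJ1
      rw [show N - 1 - 1 + 1 = N - 1 from by omega] at hJ2
      set K : ℝ := (((n - 1) * (N - 1) : ℕ) : ℝ) with hK
      have e1 : (n:ℝ) ^ (2 * (N - 1))
            * ∫ y in Ioo (0:ℝ) 1, y ^ (2 * (N - 1) - 1) * (1 - y) ^ ((n - 1) * (N - 1))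
          ≤ ((2 * (N - 1) - 1).factorial : ℝ) * 4 ^ (N - 1) := by
        have hnp2 : (n:ℝ) ^ (2 * (N - 1)) ≤ 4 ^ (N - 1) * K ^ (2 * (N - 1)) := by
          calc (n:ℝ) ^ (2 * (N - 1)) ≤ (2 * K) ^ (2 * (N - 1)) :=
                pow_le_pow_left₀ (by positivity) hmn _
            _ = 4 ^ (N - 1) * K ^ (2 * (N - 1)) := by
                rw [mul_pow, show (2:ℝ) ^ (2 * (N - 1)) = 4 ^ (N - 1) from by
                  rw [pow_mul]; norm_num]
        calc (n:ℝ) ^ (2 * (N - 1))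
              * ∫ y in Ioo (0:ℝ) 1, y ^ (2 * (N - 1) - 1) * (1 - y) ^ ((n - 1) * (N - 1))
            ≤ (n:ℝ) ^ (2 * (N - 1)) * (((2 * (N - 1) - 1).factorial : ℝ) / K ^ (2 * (N - 1))) :=
              mul_le_mul_of_nonneg_left hJ1 (by positivity)
          _ ≤ (4 ^ (N - 1) * K ^ (2 * (N - 1)))
              * (((2 * (N - 1) - 1).factorial : ℝ) / K ^ (2 * (N - 1))) :=
              mul_le_mul_of_nonneg_right hnp2 (by positivity)
          _ = ((2 * (N - 1) - 1).factorial : ℝ) * 4 ^ (N - 1) := by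
              field_simp
      have e2 : (2 * (n:ℝ)) ^ (N - 1)
            * ∫ y in Ioo (0:ℝ) 1, y ^ (N - 1 - 1) * (1 - y) ^ ((n - 1) * (N - 1))
          ≤ ((N - 1 - 1).factorial : ℝ) * 4 ^ (N - 1) := by
        have hnp2 : (2 * (n:ℝ)) ^ (N - 1) ≤ 4 ^ (N - 1) * K ^ (N - 1) := by
          calc (2 * (n:ℝ)) ^ (N - 1) ≤ (4 * K) ^ (N - 1) := by
                apply pow_le_pow_left₀ (by positivity)
                linarith
            _ = 4 ^ (N - 1) * K ^ (N - 1) := mul_pow _ _ _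
        calc (2 * (n:ℝ)) ^ (N - 1)
              * ∫ y in Ioo (0:ℝ) 1, y ^ (N - 1 - 1) * (1 - y) ^ ((n - 1) * (N - 1))
            ≤ (2 * (n:ℝ)) ^ (N - 1) * (((N - 1 - 1).factorial : ℝ) / K ^ (N - 1)) :=
              mul_le_mul_of_nonneg_left hJ2 (by positivity)
          _ ≤ (4 ^ (N - 1) * K ^ (N - 1)) * (((N - 1 - 1).factorial : ℝ) / K ^ (N - 1)) :=
              mul_le_mul_of_nonneg_right hnp2 (by positivity)
          _ = ((N - 1 - 1).factorial : ℝ) * 4 ^ (N - 1) := by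
              field_simp
      linarith
  -- put everything together
  calc ∫ x in (ball (0 : EuclideanSpace ℝ (Fin (N - 1))) 1) ×ˢ (Ioo (0:ℝ) 1),
        ‖fderiv ℝ (fun y : EuclideanSpace ℝ (Fin (N - 1)) × ℝ =>
          ((1 - ‖y.1‖) ^ n • ((n : ℝ) • y.1), (1 - ‖y.1‖) ^ n * y.2)) x‖ ^ (N - 1)
      ≤ ∫ x in (ball (0 : EuclideanSpace ℝ (Fin (N - 1))) 1) ×ˢ (Ioo (0:ℝ) 1), G ‖x.1‖ := hcmp
    _ = ∫ x' in ball (0 : EuclideanSpace ℝ (Fin (N - 1))) 1, G ‖x'‖ := hsplit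
    _ = ∫ x' : EuclideanSpace ℝ (Fin (N - 1)), G ‖x'‖ := hext
    _ = (N - 1) • vol1 • ∫ y in Ioi (0:ℝ), y ^ (N - 1 - 1) • G y := hpolar
    _ = ((N - 1 : ℕ) : ℝ) * (vol1 * ∫ y in Ioo (0:ℝ) 1, y ^ (N - 1 - 1) * τ y ^ (N - 1)) := by
        rw [hinner, nsmul_eq_mul, smul_eq_mul]
    _ ≤ ((N - 1 : ℕ) : ℝ) * (vol1 * S) := by
        apply mul_le_mul_of_nonneg_left
          (mul_le_mul_of_nonneg_left hIbound hvolnn) (Nat.cast_nonneg _)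
    _ ≤ ((N - 1 : ℕ) : ℝ) * (vol1 * S) + 1 := by linarith
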